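/- Let G be a group with subgroups Γ₁, Γ₂ ≤ G, and let S₁, S₂, S₃, S₄ ⊆ G be finite subsets. Then there exists a finite subset S ⊆ G such that (S₁Γ₂S₂) ∩ (S₃Γ₁S₄) ⊆ ⋃_{g,h,k ∈ S} h(Γ₁ ∩ gΓ₂g⁻¹)k. -/

import Mathlib

/-- The conjugate subgroup `g S g⁻¹`. -/
def conjSub {G : Type*} [Group G] (g : G) (S : Subgroup G) : Subgroup G :=
  S.map (MulAut.conj g).toMonoidHom

/-- Covering `(S₁Γ₂S₂) ∩ (S₃Γ₁S₄)` by finitely many sets `h (Γ₁ ∩ gΓ₂g⁻¹) k`. -/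
theorem stmt11 {G : Type*} [Group G] (Γ₁ Γ₂ : Subgroup G) (S₁ S₂ S₃ S₄ : Finset G) :
    ∃ S : Finset G, ∀ x : G,
      (∃ a ∈ S₁, ∃ b ∈ Γ₂, ∃ c ∈ S₂, x = a * b * c) →
      (∃ a ∈ S₃, ∃ b ∈ Γ₁, ∃ c ∈ S₄, x = a * b * c) →
      ∃ g ∈ S, ∃ h ∈ S, ∃ k ∈ S, ∃ y ∈ Γ₁ ⊓ conjSub g Γ₂, x = h * y * k := by
  classical
  set P : G × G × G × G → G → Prop := fun t x =>
    (∃ b ∈ Γ₂, x = t.1 * b * t.2.1) ∧ (∃ b ∈ Γ₁, x = t.2.2.1 * b * t.2.2.2) with hP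
  set f : G × G × G × G → Finset G := fun t =>
    if h : ∃ x, P t x then {t.2.2.1⁻¹ * t.1, t.2.2.1, t.2.2.1⁻¹ * h.choose} else ∅ with hf
  refine ⟨(S₁ ×ˢ S₂ ×ˢ S₃ ×ˢ S₄).biUnion f, ?_⟩
  rintro x ⟨a, ha, b, hb, c, hc, rfl⟩ ⟨a', ha', b', hb', c', hc', hx⟩
  set t : G × G × G × G := (a, c, a', c') with ht
  have hex : ∃ x, P t x := ⟨a * b * c, ⟨b, hb, rfl⟩, ⟨b', hb', hx⟩⟩
  obtain ⟨⟨b₀, hb₀, hx₀₂⟩, ⟨b₀', hb₀', hx₀₁⟩⟩ := hex.choose_spec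
  set x₀ := hex.choose with hx₀
  simp only [ht] at hx₀₂ hx₀₁
  have hft : f t = {a'⁻¹ * a, a', a'⁻¹ * x₀} := by
    simp only [hf, dif_pos hex]
    rfl
  have hmem : ∀ z ∈ ({a'⁻¹ * a, a', a'⁻¹ * x₀} : Finset G),
      z ∈ (S₁ ×ˢ S₂ ×ˢ S₃ ×ˢ S₄).biUnion f := by
    intro z hz
    exact Finset.mem_biUnion.2 ⟨t, by simp [ht, ha, hb', hc, ha', hc', Finset.mem_product],
      hft ▸ hz⟩
  clear_value x₀
  refine ⟨a'⁻¹ * a, hmem _ (by simp), a', hmem _ (by simp), a'⁻¹ * x₀, hmem _ (by simp),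
    a'⁻¹ * (a * b * c * x₀⁻¹) * a', Subgroup.mem_inf.mpr ⟨?_, ?_⟩, ?_⟩
  · have : a'⁻¹ * (a * b * c * x₀⁻¹) * a' = b' * b₀'⁻¹ := by
      rw [hx, hx₀₁]; group
    rw [this]
    exact mul_mem hb' (inv_mem hb₀')
  · refine ⟨b * b₀⁻¹, mul_mem hb (inv_mem hb₀), ?_⟩
    simp only [MulEquiv.toMonoidHom_eq_coe, MonoidHom.coe_coe, MulAut.conj_apply]
    rw [hx₀₂]; group
  · group
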